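/- Let f be a nonnegative trigonometric polynomial, let g ≥ 2 and k = n/g ∈ ℕ, and let p_{n,g}^k = C_n(p) Z_{n,g}^k ∈ ℂ^{n×k}, where p is a trigonometric polynomial satisfying the TGM condition (i) at every zero of f and the TGM condition (ii) globally. Then (p_{n,g}^k)^H C_n(f) p_{n,g}^k = C_k(f̂), where f̂(x) = (1/g) Σ_{y ∈ Ω_g(x/g)} f(y)|p(y)|², and f̂ is a nonnegative trigonometric polynomial. -/

import Mathlib

open Matrix Complex Filter Topology
open scoped Matrix ComplexConjugate

noncomputable section

/-- The Fourier matrix of size `n`: `F_n = (1/√n)[e^{-2πijk/n}]_{j,k=0}^{n-1}`. -/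
def fourierMatrix (n : ℕ) : Matrix (Fin n) (Fin n) ℂ :=
  Matrix.of fun j k : Fin n =>
    (((Real.sqrt n : ℝ) : ℂ))⁻¹ *
      Complex.exp (-(2 * (Real.pi : ℂ) * Complex.I * ((j : ℕ) : ℂ) * ((k : ℕ) : ℂ)) / (n : ℂ))

/-- The cutting matrix `Z_{n,g}^k`: `[Z]_{i,j} = 1` if `i ≡ g·j (mod n)`, else `0`. -/
def cuttingMatrix (n g k : ℕ) : Matrix (Fin n) (Fin k) ℂ :=
  Matrix.of fun (i : Fin n) (j : Fin k) =>
    if (((i : ℕ) : ZMod n) = ((g * (j : ℕ) : ℕ) : ZMod n)) then (1 : ℂ) else 0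

/-- A real-valued function is a trigonometric polynomial: a finite sum `∑_{|j|≤c} a_j e^{ijx}`. -/
def IsTrigPolyR (f : ℝ → ℝ) : Prop :=
  ∃ (c : ℕ) (a : ℤ → ℂ), ∀ x : ℝ,
    (f x : ℂ) = ∑ j ∈ Finset.Icc (-(c : ℤ)) (c : ℤ), a j * Complex.exp (Complex.I * (j : ℂ) * (x : ℂ))

/-- The circulant matrix generated by a real-valued `f`:
`C_n(f) = F_n · diag_{j}(f(2πj/n)) · F_nᴴ`. -/
def circulantGenR (n : ℕ) (f : ℝ → ℝ) : Matrix (Fin n) (Fin n) ℂ :=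
  fourierMatrix n *
    Matrix.diagonal (fun j : Fin n => ((f (2 * Real.pi * (j : ℕ) / n) : ℝ) : ℂ)) *
    (fourierMatrix n)ᴴ

/-- TGM condition (i): for every zero `x₀` of `f` (in `[0,2π)`), for each `k = 1,…,g−1`,
`lim_{x→x₀} p(x + 2πk/g)² / f(x)` exists finite. -/
def TGMCondOne (f p : ℝ → ℝ) (g : ℕ) : Prop :=
  ∀ x₀ ∈ Set.Ico (0 : ℝ) (2 * Real.pi), f x₀ = 0 →
    ∀ j : ℕ, 1 ≤ j → j < g →
      ∃ L : ℝ,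
        Filter.Tendsto (fun x : ℝ => (p (x + 2 * Real.pi * (j : ℝ) / (g : ℝ)))^2 / f x)
          (nhdsWithin x₀ {x : ℝ | f x ≠ 0}) (nhds L)

/-- TGM condition (ii): `∑_{y ∈ Ω_g(x)} p(y)² > 0` for all `x ∈ [0,2π)`. -/
def TGMCondTwo (p : ℝ → ℝ) (g : ℕ) : Prop :=
  ∀ x ∈ Set.Ico (0 : ℝ) (2 * Real.pi),
    0 < ∑ j ∈ Finset.range g, (p (x + 2 * Real.pi * (j : ℝ) / (g : ℝ)))^2

/-- The projected symbol `f̂(x) = (1/g) ∑_{y ∈ Ω_g(x/g)} f(y) |p(y)|²`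
(the `g`-corners of `x/g` being the points `(x + 2πj)/g`, `j = 0,…,g−1`). -/
def projSymbol (g : ℕ) (f p : ℝ → ℝ) : ℝ → ℝ := fun x =>
  ((g : ℝ))⁻¹ *
    ∑ j ∈ Finset.range g,
      f ((x + 2 * Real.pi * (j : ℝ)) / (g : ℝ)) * (p ((x + 2 * Real.pi * (j : ℝ)) / (g : ℝ)))^2

open scoped Pointwise

lemma sum_exp_int (N : ℕ) (hN : 0 < N) (d : ℤ) :
    ∑ j ∈ Finset.range N, Complex.exp (2 * Real.pi * Complex.I * d * j / N) =
      if (N : ℤ) ∣ d then (N : ℂ) else 0 := by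
  have hN0 : (N : ℂ) ≠ 0 := Nat.cast_ne_zero.mpr hN.ne'
  have h2pi : (2 * (Real.pi : ℂ) * Complex.I) ≠ 0 := by
    simp [Real.pi_ne_zero, Complex.I_ne_zero, Complex.ofReal_ne_zero]
  have hterm : ∀ j ∈ Finset.range N, Complex.exp (2 * Real.pi * Complex.I * d * j / N)
      = Complex.exp (2 * Real.pi * Complex.I * d / N) ^ j := by
    intro j _
    rw [← Complex.exp_nat_mul]
    congr 1
    ring
  rw [Finset.sum_congr rfl hterm]
  by_cases hdvd : (N : ℤ) ∣ d
  · obtain ⟨e, rfl⟩ := hdvd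
    have : (2 * (Real.pi : ℂ) * Complex.I * ((N * e : ℤ) : ℂ) / N) = (e : ℂ) * (2 * Real.pi * Complex.I) := by
      push_cast
      field_simp
    rw [this, Complex.exp_int_mul_two_pi_mul_I]
    simp
  · have hz : Complex.exp (2 * Real.pi * Complex.I * d / N) ≠ 1 := by
      intro h
      rw [Complex.exp_eq_one_iff] at h
      obtain ⟨m, hm⟩ := h
      apply hdvd
      refine ⟨m, ?_⟩
      have : (d : ℂ) = (N : ℂ) * m := by
        field_simp at hm
        have h' : 2 * (Real.pi : ℂ) * Complex.I * (d : ℂ)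
            = 2 * (Real.pi : ℂ) * Complex.I * ((N : ℂ) * m) := by
          linear_combination (2 * (Real.pi : ℂ) * Complex.I) * hm
        exact mul_left_cancel₀ h2pi h'
      exact_mod_cast this
    rw [geom_sum_eq hz, if_neg hdvd]
    have hpow : Complex.exp (2 * Real.pi * Complex.I * d / N) ^ N = 1 := by
      rw [← Complex.exp_nat_mul]
      have : (N : ℂ) * (2 * Real.pi * Complex.I * d / N) = (d : ℂ) * (2 * Real.pi * Complex.I) := by
        field_simp
      rw [this, Complex.exp_int_mul_two_pi_mul_I]
    rw [hpow]
    simp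

lemma conj_fourier (n : ℕ) (s j : Fin n) :
    star (fourierMatrix n s j) =
      (((Real.sqrt n : ℝ) : ℂ))⁻¹ *
        Complex.exp ((2 * (Real.pi : ℂ) * Complex.I * ((s : ℕ) : ℂ) * ((j : ℕ) : ℂ)) / (n : ℂ)) := by
  show conj (fourierMatrix n s j) = _
  simp only [fourierMatrix, Matrix.of_apply, _root_.map_mul, map_inv₀, Complex.conj_ofReal]
  rw [← Complex.exp_conj]
  congr 1
  simp only [map_div₀, map_neg, _root_.map_mul, Complex.conj_I, Complex.conj_ofReal,
    map_natCast, map_ofNat]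
  ring

lemma sqrt_inv_mul (n : ℕ) :
    (((Real.sqrt n : ℝ) : ℂ))⁻¹ * (((Real.sqrt n : ℝ) : ℂ))⁻¹ = (n : ℂ)⁻¹ := by
  rw [← mul_inv]
  congr 1
  rw [← Complex.ofReal_mul, Real.mul_self_sqrt (by positivity)]
  simp

lemma circ_apply (n : ℕ) (hn : 0 < n) (f : ℝ → ℝ) (r s : Fin n) :
    circulantGenR n f r s = ∑ j : Fin n,
      (n : ℂ)⁻¹ * ((f (2 * Real.pi * (j : ℕ) / n) : ℝ) : ℂ) *
        Complex.exp (2 * (Real.pi : ℂ) * Complex.I * (((s : ℕ) : ℂ) - ((r : ℕ) : ℂ)) * ((j : ℕ) : ℂ) / (n : ℂ)) := by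
  have hn0 : (n : ℂ) ≠ 0 := Nat.cast_ne_zero.mpr hn.ne'
  unfold circulantGenR
  rw [Matrix.mul_apply]
  apply Finset.sum_congr rfl
  intro j _
  rw [Matrix.mul_diagonal, Matrix.conjTranspose_apply, conj_fourier]
  simp only [fourierMatrix, Matrix.of_apply]
  rw [show ∀ (a b c d : ℂ), a * b * c * (a * d) = (a * a) * c * (b * d) from fun _ _ _ _ => by ring,
    sqrt_inv_mul, ← Complex.exp_add]
  congr 1
  ring

lemma fourier_unitary (n : ℕ) (hn : 0 < n) : (fourierMatrix n)ᴴ * fourierMatrix n = 1 := by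
  have hn0 : (n : ℂ) ≠ 0 := Nat.cast_ne_zero.mpr hn.ne'
  ext r s
  rw [Matrix.mul_apply]
  have hterm : ∀ j ∈ (Finset.univ : Finset (Fin n)), (fourierMatrix n)ᴴ r j * fourierMatrix n j s
      = (fun m : ℕ => (n : ℂ)⁻¹ *
          Complex.exp (2 * Real.pi * Complex.I * (((r : ℕ) : ℂ) - ((s : ℕ) : ℂ)) * (m : ℂ) / (n : ℂ))) (j : ℕ) := by
    intro j _
    rw [Matrix.conjTranspose_apply, conj_fourier]
    simp only [fourierMatrix, Matrix.of_apply]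
    rw [show ∀ (a b c : ℂ), a * b * (a * c) = (a * a) * (b * c) from fun _ _ _ => by ring,
      sqrt_inv_mul, ← Complex.exp_add]
    congr 1
    ring
  rw [Finset.sum_congr rfl hterm,
    Fin.sum_univ_eq_sum_range (fun m : ℕ => (n : ℂ)⁻¹ *
      Complex.exp (2 * Real.pi * Complex.I * (((r : ℕ) : ℂ) - ((s : ℕ) : ℂ)) * (m : ℂ) / (n : ℂ))) n,
    ← Finset.mul_sum]
  have key := sum_exp_int n hn (((r : ℕ) : ℤ) - ((s : ℕ) : ℤ))
  push_cast at key
  rw [key]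
  by_cases h : r = s
  · subst h
    rw [if_pos (by simp), inv_mul_cancel₀ hn0, Matrix.one_apply_eq]
  · have hval : (r : ℕ) ≠ (s : ℕ) := fun hh => h (Fin.ext hh)
    have hd0 : (((r : ℕ) : ℤ) - ((s : ℕ) : ℤ)) ≠ 0 := by
      intro hh; apply hval; omega
    have hdvd : ¬ (n : ℤ) ∣ (((r : ℕ) : ℤ) - ((s : ℕ) : ℤ)) := by
      intro hd
      have h2 : (n : ℤ) ≤ |((r : ℕ) : ℤ) - ((s : ℕ) : ℤ)| :=
        Int.le_of_dvd (abs_pos.mpr hd0) ((dvd_abs _ _).mpr hd)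
      have hr : ((r : ℕ) : ℤ) < n := by exact_mod_cast r.is_lt
      have hs : ((s : ℕ) : ℤ) < n := by exact_mod_cast s.is_lt
      have hr0 : (0 : ℤ) ≤ ((r : ℕ) : ℤ) := by positivity
      have hs0 : (0 : ℤ) ≤ ((s : ℕ) : ℤ) := by positivity
      rcases abs_cases (((r : ℕ) : ℤ) - ((s : ℕ) : ℤ)) with ⟨h3, _⟩ | ⟨h3, _⟩ <;> omega
    rw [if_neg hdvd, mul_zero, Matrix.one_apply_ne h]

lemma circ_herm (n : ℕ) (f : ℝ → ℝ) : (circulantGenR n f)ᴴ = circulantGenR n f := by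
  unfold circulantGenR
  rw [Matrix.conjTranspose_mul, Matrix.conjTranspose_mul, Matrix.conjTranspose_conjTranspose,
    Matrix.diagonal_conjTranspose, Matrix.mul_assoc]
  congr
  funext i
  simp [Matrix.diagonal_apply, Pi.star_apply, Complex.star_def, Complex.conj_ofReal]

lemma circ_mul (n : ℕ) (hn : 0 < n) (f h : ℝ → ℝ) :
    circulantGenR n f * circulantGenR n h = circulantGenR n (fun x => f x * h x) := by
  unfold circulantGenR
  simp only [Matrix.mul_assoc]
  rw [← Matrix.mul_assoc (fourierMatrix n)ᴴ (fourierMatrix n), fourier_unitary n hn,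
    Matrix.one_mul, ← Matrix.mul_assoc (Matrix.diagonal _) (Matrix.diagonal _),
    Matrix.diagonal_mul_diagonal]
  congr 2
  funext i
  push_cast
  ring

lemma cut_lemma (g k : ℕ) (hg : 0 < g) (hk : 0 < k) (h : ℝ → ℝ) :
    (cuttingMatrix (g * k) g k)ᴴ * circulantGenR (g * k) h * cuttingMatrix (g * k) g k
      = circulantGenR k (fun x => ((g : ℝ))⁻¹ *
          ∑ l ∈ Finset.range g, h ((x + 2 * Real.pi * (l : ℝ)) / (g : ℝ))) := by
  have hn : 0 < g * k := Nat.mul_pos hg hk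
  have hg0 : (g : ℂ) ≠ 0 := Nat.cast_ne_zero.mpr hg.ne'
  have hk0 : (k : ℂ) ≠ 0 := Nat.cast_ne_zero.mpr hk.ne'
  have hgR : (g : ℝ) ≠ 0 := Nat.cast_ne_zero.mpr hg.ne'
  have hkR : (k : ℝ) ≠ 0 := Nat.cast_ne_zero.mpr hk.ne'
  set emb : Fin k → Fin (g * k) := fun t => ⟨g * (t : ℕ), mul_lt_mul_of_pos_left t.is_lt hg⟩ with hemb
  have hZ : ∀ (i : Fin (g * k)) (t : Fin k),
      cuttingMatrix (g * k) g k i t = if i = emb t then 1 else 0 := by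
    intro i t
    simp only [cuttingMatrix, Matrix.of_apply]
    refine if_congr ?_ rfl rfl
    rw [ZMod.natCast_eq_natCast_iff]
    constructor
    · intro hmod
      have h1 : (i : ℕ) % (g * k) = (g * (t : ℕ)) % (g * k) := hmod
      rw [Nat.mod_eq_of_lt i.is_lt, Nat.mod_eq_of_lt (emb t).is_lt] at h1
      exact Fin.ext h1
    · intro hE
      rw [hE]
  ext s t
  have e1 : ((cuttingMatrix (g * k) g k)ᴴ * circulantGenR (g * k) h * cuttingMatrix (g * k) g k) s t
      = circulantGenR (g * k) h (emb s) (emb t) := by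
    rw [Matrix.mul_assoc, Matrix.mul_apply]
    have e2 : ∀ i : Fin (g * k), (cuttingMatrix (g * k) g k)ᴴ s i
        = if i = emb s then 1 else 0 := by
      intro i
      rw [Matrix.conjTranspose_apply, hZ]
      split <;> simp
    have e3 : ∀ i : Fin (g * k), (circulantGenR (g * k) h * cuttingMatrix (g * k) g k) i t
        = circulantGenR (g * k) h i (emb t) := by
      intro i
      rw [Matrix.mul_apply]
      simp [hZ, mul_ite]
    simp only [e2, e3, ite_mul, one_mul, zero_mul]
    simp
  rw [e1, circ_apply (g * k) hn h (emb s) (emb t), circ_apply k hk _ s t]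
  -- expand the projected symbol on the RHS
  have eRHS : ∀ m : Fin k,
      (k : ℂ)⁻¹ * ((((g : ℝ))⁻¹ *
          ∑ l ∈ Finset.range g, h ((2 * Real.pi * (m : ℕ) / k + 2 * Real.pi * (l : ℝ)) / (g : ℝ)) : ℝ) : ℂ) *
        Complex.exp (2 * (Real.pi : ℂ) * Complex.I * (((t : ℕ) : ℂ) - ((s : ℕ) : ℂ)) * ((m : ℕ) : ℂ) / (k : ℂ))
      = ∑ l : Fin g, (k : ℂ)⁻¹ * (g : ℂ)⁻¹ *
          ((h ((2 * Real.pi * (m : ℕ) / k + 2 * Real.pi * ((l : ℕ) : ℝ)) / (g : ℝ)) : ℝ) : ℂ) *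
          Complex.exp (2 * (Real.pi : ℂ) * Complex.I * (((t : ℕ) : ℂ) - ((s : ℕ) : ℂ)) * ((m : ℕ) : ℂ) / (k : ℂ)) := by
    intro m
    rw [Complex.ofReal_mul, Complex.ofReal_sum]
    rw [Fin.sum_univ_eq_sum_range
      (fun l : ℕ => (k : ℂ)⁻¹ * (g : ℂ)⁻¹ *
        ((h ((2 * Real.pi * (m : ℕ) / k + 2 * Real.pi * (l : ℝ)) / (g : ℝ)) : ℝ) : ℂ) *
        Complex.exp (2 * (Real.pi : ℂ) * Complex.I * (((t : ℕ) : ℂ) - ((s : ℕ) : ℂ)) * ((m : ℕ) : ℂ) / (k : ℂ))) g]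
    rw [Finset.mul_sum, Finset.mul_sum, Finset.sum_mul]
    apply Finset.sum_congr rfl
    intro l _
    push_cast
    ring
  conv_rhs => rw [Finset.sum_congr rfl (fun m _ => eRHS m)]
  rw [Finset.sum_comm]
  -- reindex the LHS sum over Fin (g*k) by Fin g × Fin k
  rw [← Equiv.sum_comp (finProdFinEquiv : Fin g × Fin k ≃ Fin (g * k))
    (fun j : Fin (g * k) =>
      ((g * k : ℕ) : ℂ)⁻¹ * ((h (2 * Real.pi * (j : ℕ) / (g * k : ℕ)) : ℝ) : ℂ) *
        Complex.exp (2 * (Real.pi : ℂ) * Complex.I *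
          (((emb t : ℕ) : ℂ) - ((emb s : ℕ) : ℂ)) * ((j : ℕ) : ℂ) / ((g * k : ℕ) : ℂ)))]
  rw [Fintype.sum_prod_type]
  apply Finset.sum_congr rfl
  intro l _
  apply Finset.sum_congr rfl
  intro m _
  have hval : ((finProdFinEquiv (l, m) : Fin (g * k)) : ℕ) = (m : ℕ) + k * (l : ℕ) := rfl
  have hvs : ((emb s : Fin (g * k)) : ℕ) = g * (s : ℕ) := rfl
  have hvt : ((emb t : Fin (g * k)) : ℕ) = g * (t : ℕ) := rfl
  rw [hval, hvs, hvt]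
  have harg : (2 * Real.pi * (((m : ℕ) + k * (l : ℕ) : ℕ) : ℝ) / ((g * k : ℕ) : ℝ))
      = ((2 * Real.pi * (m : ℕ) / k + 2 * Real.pi * ((l : ℕ) : ℝ)) / (g : ℝ)) := by
    push_cast
    field_simp
  rw [harg]
  have hcoef : (((g * k : ℕ) : ℂ))⁻¹ = (k : ℂ)⁻¹ * (g : ℂ)⁻¹ := by
    push_cast
    rw [mul_inv]
    ring
  rw [hcoef]
  have hexp : Complex.exp (2 * (Real.pi : ℂ) * Complex.I *
        (((g * (t : ℕ) : ℕ) : ℂ) - ((g * (s : ℕ) : ℕ) : ℂ)) * ((((m : ℕ) + k * (l : ℕ) : ℕ)) : ℂ) / ((g * k : ℕ) : ℂ))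
      = Complex.exp (2 * (Real.pi : ℂ) * Complex.I * (((t : ℕ) : ℂ) - ((s : ℕ) : ℂ)) * ((m : ℕ) : ℂ) / (k : ℂ)) := by
    have hsplit : (2 * (Real.pi : ℂ) * Complex.I *
          (((g * (t : ℕ) : ℕ) : ℂ) - ((g * (s : ℕ) : ℕ) : ℂ)) * ((((m : ℕ) + k * (l : ℕ) : ℕ)) : ℂ) / ((g * k : ℕ) : ℂ))
        = 2 * (Real.pi : ℂ) * Complex.I * (((t : ℕ) : ℂ) - ((s : ℕ) : ℂ)) * ((m : ℕ) : ℂ) / (k : ℂ)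
          + (((((t : ℕ) : ℤ) - ((s : ℕ) : ℤ)) * (l : ℕ) : ℤ) : ℂ) * (2 * (Real.pi : ℂ) * Complex.I) := by
      push_cast
      field_simp
    rw [hsplit, Complex.exp_add, Complex.exp_int_mul_two_pi_mul_I, mul_one]
  rw [hexp]

lemma trigC_mul (F G : ℝ → ℂ) (SF SG : Finset ℤ) (aF aG : ℤ → ℂ)
    (hF : ∀ x : ℝ, F x = ∑ j ∈ SF, aF j * Complex.exp (Complex.I * (j : ℂ) * (x : ℂ)))
    (hG : ∀ x : ℝ, G x = ∑ j ∈ SG, aG j * Complex.exp (Complex.I * (j : ℂ) * (x : ℂ))) :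
    ∃ (S : Finset ℤ) (a : ℤ → ℂ), ∀ x : ℝ,
      F x * G x = ∑ j ∈ S, a j * Complex.exp (Complex.I * (j : ℂ) * (x : ℂ)) := by
  refine ⟨SF + SG, fun m => ∑ i ∈ SF, aF i * (if m - i ∈ SG then aG (m - i) else 0), fun x => ?_⟩
  rw [hF, hG, Finset.sum_mul_sum]
  rw [show (∑ j ∈ SF + SG,
      (∑ i ∈ SF, aF i * (if j - i ∈ SG then aG (j - i) else 0)) *
        Complex.exp (Complex.I * (j : ℂ) * (x : ℂ)))
    = ∑ i ∈ SF, ∑ j ∈ SF + SG,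
        (if j - i ∈ SG then aF i * aG (j - i) * Complex.exp (Complex.I * (j : ℂ) * (x : ℂ)) else 0) from by
      rw [Finset.sum_comm]
      refine Finset.sum_congr rfl fun j _ => ?_
      rw [Finset.sum_mul]
      refine Finset.sum_congr rfl fun i _ => ?_
      split <;> simp [mul_assoc]]
  refine Finset.sum_congr rfl fun i hi => ?_
  rw [← Finset.sum_filter]
  have himg : (SF + SG).filter (fun m => m - i ∈ SG) = SG.image (fun j => i + j) := by
    ext m
    simp only [Finset.mem_filter, Finset.mem_image]
    constructor
    · rintro ⟨hm, hms⟩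
      exact ⟨m - i, hms, by ring⟩
    · rintro ⟨j, hj, rfl⟩
      refine ⟨Finset.add_mem_add hi hj, by simpa using hj⟩
  rw [himg, Finset.sum_image (fun a _ b _ h => by omega)]
  refine Finset.sum_congr rfl fun j hj => ?_
  rw [add_sub_cancel_left]
  rw [show Complex.I * ((i + j : ℤ) : ℂ) * (x : ℂ)
      = Complex.I * (i : ℂ) * (x : ℂ) + Complex.I * (j : ℂ) * (x : ℂ) from by push_cast; ring,
    Complex.exp_add]
  ring

lemma trigS_to_Icc (F : ℝ → ℂ) (S : Finset ℤ) (a : ℤ → ℂ)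
    (hF : ∀ x : ℝ, F x = ∑ j ∈ S, a j * Complex.exp (Complex.I * (j : ℂ) * (x : ℂ))) :
    ∃ (c : ℕ) (b : ℤ → ℂ), ∀ x : ℝ,
      F x = ∑ j ∈ Finset.Icc (-(c : ℤ)) (c : ℤ), b j * Complex.exp (Complex.I * (j : ℂ) * (x : ℂ)) := by
  refine ⟨S.sup (fun j => j.natAbs), fun j => if j ∈ S then a j else 0, fun x => ?_⟩
  rw [hF]
  have hsub : S ⊆ Finset.Icc (-((S.sup (fun j => j.natAbs) : ℕ) : ℤ)) ((S.sup (fun j => j.natAbs) : ℕ) : ℤ) := by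
    intro j hj
    have : j.natAbs ≤ S.sup (fun j => j.natAbs) := by
      simpa using Finset.le_sup (f := fun j : ℤ => j.natAbs) hj
    simp only [Finset.mem_Icc]
    omega
  rw [show (∑ j ∈ Finset.Icc (-((S.sup (fun j => j.natAbs) : ℕ) : ℤ)) ((S.sup (fun j => j.natAbs) : ℕ) : ℤ),
      (if j ∈ S then a j else 0) * Complex.exp (Complex.I * (j : ℂ) * (x : ℂ)))
    = ∑ j ∈ Finset.Icc (-((S.sup (fun j => j.natAbs) : ℕ) : ℤ)) ((S.sup (fun j => j.natAbs) : ℕ) : ℤ),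
      (if j ∈ S then a j * Complex.exp (Complex.I * (j : ℂ) * (x : ℂ)) else 0) from
      Finset.sum_congr rfl fun j _ => by split <;> simp]
  rw [Finset.sum_ite_mem, Finset.inter_eq_right.mpr hsub]


lemma trig_avg (g : ℕ) (hg : 0 < g) (q : ℝ → ℝ) (hq : IsTrigPolyR q) :
    IsTrigPolyR (fun x => ((g : ℝ))⁻¹ *
      ∑ l ∈ Finset.range g, q ((x + 2 * Real.pi * (l : ℝ)) / (g : ℝ))) := by
  obtain ⟨c, b, hb⟩ := hq
  have hgC : (g : ℂ) ≠ 0 := Nat.cast_ne_zero.mpr hg.ne'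
  have hgZ : (1 : ℤ) ≤ (g : ℤ) := by exact_mod_cast hg
  have hgZ' : (g : ℤ) ≠ 0 := by omega
  refine ⟨c, fun m => if (g : ℤ) * m ∈ Finset.Icc (-(c : ℤ)) (c : ℤ) then b ((g : ℤ) * m) else 0,
    fun x => ?_⟩
  have h1 : ∀ l : ℕ, ((q ((x + 2 * Real.pi * (l : ℝ)) / (g : ℝ)) : ℝ) : ℂ)
      = ∑ m ∈ Finset.Icc (-(c : ℤ)) (c : ℤ),
          b m * Complex.exp (Complex.I * (m : ℂ) * (x : ℂ) / (g : ℂ)) *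
            Complex.exp (2 * Real.pi * Complex.I * (m : ℂ) * (l : ℂ) / (g : ℂ)) := by
    intro l
    rw [hb]
    refine Finset.sum_congr rfl fun m _ => ?_
    rw [mul_assoc (b m) _ _, ← Complex.exp_add]
    congr 1
    push_cast
    field_simp
  rw [Complex.ofReal_mul, Complex.ofReal_inv, Complex.ofReal_natCast, Complex.ofReal_sum,
    Finset.sum_congr rfl (fun l _ => h1 l), Finset.sum_comm, Finset.mul_sum]
  have h2 : ∀ m : ℤ,
      (g : ℂ)⁻¹ * ∑ l ∈ Finset.range g,
          b m * Complex.exp (Complex.I * (m : ℂ) * (x : ℂ) / (g : ℂ)) *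
            Complex.exp (2 * Real.pi * Complex.I * (m : ℂ) * (l : ℂ) / (g : ℂ))
      = if (g : ℤ) ∣ m then b m * Complex.exp (Complex.I * (m : ℂ) * (x : ℂ) / (g : ℂ)) else 0 := by
    intro m
    rw [← Finset.mul_sum, sum_exp_int g hg m]
    split
    · field_simp
    · simp
  rw [Finset.sum_congr rfl (fun m _ => h2 m), ← Finset.sum_filter]
  have hRHS : ∑ m ∈ Finset.Icc (-(c : ℤ)) (c : ℤ),
      (if (g : ℤ) * m ∈ Finset.Icc (-(c : ℤ)) (c : ℤ) then b ((g : ℤ) * m) else 0) *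
        Complex.exp (Complex.I * (m : ℂ) * (x : ℂ))
      = ∑ m ∈ (Finset.Icc (-(c : ℤ)) (c : ℤ)).filter
          (fun m => (g : ℤ) * m ∈ Finset.Icc (-(c : ℤ)) (c : ℤ)),
          b ((g : ℤ) * m) * Complex.exp (Complex.I * (m : ℂ) * (x : ℂ)) := by
    rw [Finset.sum_filter]
    refine Finset.sum_congr rfl fun m _ => ?_
    split <;> simp
  rw [hRHS]
  refine Finset.sum_nbij' (fun m => m / (g : ℤ)) (fun m' => (g : ℤ) * m') ?_ ?_ ?_ ?_ ?_
  · intro m hm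
    simp only [Finset.mem_filter, Finset.mem_Icc] at hm ⊢
    obtain ⟨⟨hm1, hm2⟩, t, rfl⟩ := hm
    have hc : (0 : ℤ) ≤ (c : ℤ) := by positivity
    rw [Int.mul_ediv_cancel_left t hgZ']
    refine ⟨⟨?_, ?_⟩, hm1, hm2⟩
    · rcases le_or_gt 0 t with h | h
      · linarith
      · have h' : (g : ℤ) * t ≤ 1 * t := mul_le_mul_of_nonpos_right hgZ h.le
        linarith
    · rcases le_or_gt 0 t with h | h
      · have h' : 1 * t ≤ (g : ℤ) * t := mul_le_mul_of_nonneg_right hgZ h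
        linarith
      · linarith
  · intro m' hm'
    simp only [Finset.mem_filter, Finset.mem_Icc] at hm' ⊢
    exact ⟨hm'.2, m', rfl⟩
  · intro m hm
    simp only [Finset.mem_filter] at hm
    obtain ⟨_, t, rfl⟩ := hm
    show (g : ℤ) * ((g : ℤ) * t / (g : ℤ)) = (g : ℤ) * t
    rw [Int.mul_ediv_cancel_left t hgZ']
  · intro m' _
    show (g : ℤ) * m' / (g : ℤ) = m'
    rw [Int.mul_ediv_cancel_left m' hgZ']
  · intro m hm
    simp only [Finset.mem_filter] at hm
    obtain ⟨_, t, rfl⟩ := hm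
    show b ((g : ℤ) * t) * Complex.exp (Complex.I * (((g : ℤ) * t : ℤ) : ℂ) * (x : ℂ) / (g : ℂ))
        = b ((g : ℤ) * ((g : ℤ) * t / (g : ℤ))) *
            Complex.exp (Complex.I * ((((g : ℤ) * t / (g : ℤ)) : ℤ) : ℂ) * (x : ℂ))
    rw [Int.mul_ediv_cancel_left t hgZ']
    congr 1
    push_cast
    congr 1
    rw [div_eq_iff hgC]
    ring

theorem galerkin_projected_circulant (n g k : ℕ) (hg : 2 ≤ g) (hk : 0 < k) (hn : n = g * k)
    (f p : ℝ → ℝ) (hf : IsTrigPolyR f) (hf0 : ∀ x, 0 ≤ f x) (hp : IsTrigPolyR p)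
    (hc1 : TGMCondOne f p g) (hc2 : TGMCondTwo p g) :
    (circulantGenR n p * cuttingMatrix n g k)ᴴ * circulantGenR n f *
        (circulantGenR n p * cuttingMatrix n g k) = circulantGenR k (projSymbol g f p)
      ∧ (∀ x, 0 ≤ projSymbol g f p x)
      ∧ IsTrigPolyR (projSymbol g f p) := by
  subst hn
  have hg0 : 0 < g := by omega
  have hn0 : 0 < g * k := Nat.mul_pos hg0 hk
  refine ⟨?_, ?_, ?_⟩
  · have hcol : circulantGenR (g * k) p * circulantGenR (g * k) f * circulantGenR (g * k) p
        = circulantGenR (g * k) (fun x => f x * p x ^ 2) := by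
      rw [circ_mul _ hn0 p f, circ_mul _ hn0 _ p]
      exact congrArg _ (funext fun x => by ring)
    calc (circulantGenR (g * k) p * cuttingMatrix (g * k) g k)ᴴ * circulantGenR (g * k) f *
          (circulantGenR (g * k) p * cuttingMatrix (g * k) g k)
        = (cuttingMatrix (g * k) g k)ᴴ *
            (circulantGenR (g * k) p * circulantGenR (g * k) f * circulantGenR (g * k) p) *
            cuttingMatrix (g * k) g k := by
          rw [Matrix.conjTranspose_mul, circ_herm]
          simp only [Matrix.mul_assoc]
      _ = (cuttingMatrix (g * k) g k)ᴴ * circulantGenR (g * k) (fun x => f x * p x ^ 2) *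
            cuttingMatrix (g * k) g k := by rw [hcol]
      _ = circulantGenR k (projSymbol g f p) := by
          rw [cut_lemma g k hg0 hk (fun y => f y * p y ^ 2)]
          exact congrArg _ (funext fun x => rfl)
  · intro x
    unfold projSymbol
    apply mul_nonneg (by positivity)
    exact Finset.sum_nonneg fun j _ => mul_nonneg (hf0 _) (sq_nonneg _)
  · have hq : IsTrigPolyR (fun x => f x * p x ^ 2) := by
      obtain ⟨cf, af, haf⟩ := hf
      obtain ⟨cp, ap, hap⟩ := hp
      obtain ⟨S1, a1, h1⟩ := trigC_mul (fun x => ((f x : ℝ) : ℂ)) (fun x => ((p x : ℝ) : ℂ))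
        (Finset.Icc (-(cf : ℤ)) (cf : ℤ)) (Finset.Icc (-(cp : ℤ)) (cp : ℤ)) af ap
        (fun x => haf x) (fun x => hap x)
      obtain ⟨S2, a2, h2⟩ := trigC_mul (fun x => ((f x : ℝ) : ℂ) * ((p x : ℝ) : ℂ))
        (fun x => ((p x : ℝ) : ℂ)) S1 (Finset.Icc (-(cp : ℤ)) (cp : ℤ)) a1 ap
        (fun x => h1 x) (fun x => hap x)
      have hF' : ∀ x : ℝ, (((f x * p x ^ 2 : ℝ)) : ℂ)
          = ∑ j ∈ S2, a2 j * Complex.exp (Complex.I * (j : ℂ) * (x : ℂ)) := by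
        intro x
        rw [show (((f x * p x ^ 2 : ℝ)) : ℂ)
            = ((f x : ℝ) : ℂ) * ((p x : ℝ) : ℂ) * ((p x : ℝ) : ℂ) from by push_cast; ring]
        exact h2 x
      exact trigS_to_Icc (fun x => (((f x * p x ^ 2 : ℝ)) : ℂ)) S2 a2 hF'
    exact trig_avg g hg0 (fun x => f x * p x ^ 2) hq
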